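/- Let f : ℕ → ℕ be an injective function having exactly one periodic point, which is a fixed point j̄ (so f(j̄) = j̄ and f^h(k) ≠ k for all h ≥ 1 whenever k ≠ j̄). Then the point spectrum of the isometry S_f on ℓ²(ℕ) is exactly {1}, and every eigenvector of S_f is a scalar multiple of e_{j̄}. -/

import Mathlib

open scoped ENNReal

noncomputable def e (k : ℕ) : lp (fun _ : ℕ => ℂ) 2 := lp.single 2 k 1

lemma e_apply_self (k : ℕ) : (e k) k = 1 := lp.single_apply_self 2 k 1

lemma e_apply_ne {n k : ℕ} (h : n ≠ k) : (e k) n = 0 := lp.single_apply_ne 2 k 1 h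

/-- The coordinate evaluation as a continuous linear map. -/
noncomputable def proj (n : ℕ) : lp (fun _ : ℕ => ℂ) 2 →L[ℂ] ℂ :=
  LinearMap.mkContinuous
    { toFun := fun x => x n
      map_add' := fun x y => by simp [lp.coeFn_add]
      map_smul' := fun c x => by simp [lp.coeFn_smul] }
    1
    (fun x => by
      show ‖x n‖ ≤ 1 * ‖x‖
      simpa using lp.norm_apply_le_norm (by norm_num : (2 : ℝ≥0∞) ≠ 0) x n)

lemma proj_apply (n : ℕ) (x : lp (fun _ : ℕ => ℂ) 2) : proj n x = x n := rfl

lemma hasSum_S (f : ℕ → ℕ) (S : lp (fun _ : ℕ => ℂ) 2 →L[ℂ] lp (fun _ : ℕ => ℂ) 2)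
    (hS : ∀ k, S (e k) = e (f k)) (x : lp (fun _ : ℕ => ℂ) 2) :
    HasSum (fun k => x k • e (f k)) (S x) := by
  have h1 : HasSum (fun k : ℕ => lp.single 2 k (x k)) x :=
    lp.hasSum_single (by norm_num) x
  have h2 : HasSum (fun k : ℕ => S (lp.single 2 k (x k))) (S x) := S.hasSum h1
  have : ∀ k : ℕ, S (lp.single 2 k (x k)) = x k • e (f k) := by
    intro k
    have : lp.single 2 k (x k) = x k • e k := by
      rw [e, ← lp.single_smul]
      norm_num
    rw [this, map_smul, hS]
  simpa [this] using h2

lemma Sx_apply (f : ℕ → ℕ) (S : lp (fun _ : ℕ => ℂ) 2 →L[ℂ] lp (fun _ : ℕ => ℂ) 2)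
    (hS : ∀ k, S (e k) = e (f k)) (x : lp (fun _ : ℕ => ℂ) 2) (n : ℕ) :
    HasSum (fun k => x k * (e (f k)) n) ((S x) n) := by
  have := (proj n).hasSum (hasSum_S f S hS x)
  simpa [proj_apply, lp.coeFn_smul] using this

lemma Sx_apply_f (f : ℕ → ℕ) (hf : Function.Injective f)
    (S : lp (fun _ : ℕ => ℂ) 2 →L[ℂ] lp (fun _ : ℕ => ℂ) 2)
    (hS : ∀ k, S (e k) = e (f k)) (x : lp (fun _ : ℕ => ℂ) 2) (k : ℕ) :
    (S x) (f k) = x k := by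
  have h := Sx_apply f S hS x (f k)
  have heq : (fun k' => x k' * (e (f k')) (f k)) = fun k' => if k' = k then x k else 0 := by
    funext k'
    by_cases hk : k' = k
    · subst hk; simp [e_apply_self]
    · rw [e_apply_ne (fun h => hk (hf h.symm))]
      simp [hk]
  rw [heq] at h
  exact h.unique (hasSum_ite_eq k (x k))

lemma Sx_apply_not_range (f : ℕ → ℕ)
    (S : lp (fun _ : ℕ => ℂ) 2 →L[ℂ] lp (fun _ : ℕ => ℂ) 2)
    (hS : ∀ k, S (e k) = e (f k)) (x : lp (fun _ : ℕ => ℂ) 2) {n : ℕ}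
    (hn : n ∉ Set.range f) :
    (S x) n = 0 := by
  have h := Sx_apply f S hS x n
  have heq : (fun k => x k * (e (f k)) n) = fun _ => (0 : ℂ) := by
    funext k
    rw [e_apply_ne (fun h => hn ⟨k, h.symm⟩)]
    simp
  rw [heq] at h
  exact h.unique hasSum_zero

lemma norm_Sx (f : ℕ → ℕ) (hf : Function.Injective f)
    (S : lp (fun _ : ℕ => ℂ) 2 →L[ℂ] lp (fun _ : ℕ => ℂ) 2)
    (hS : ∀ k, S (e k) = e (f k)) (x : lp (fun _ : ℕ => ℂ) 2) :
    ‖S x‖ = ‖x‖ := by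
  have hp : (0 : ℝ) < (2 : ℝ≥0∞).toReal := by norm_num
  have h1 : HasSum (fun n => ‖(S x) n‖ ^ (2 : ℝ≥0∞).toReal) (‖S x‖ ^ (2 : ℝ≥0∞).toReal) :=
    lp.hasSum_norm hp (S x)
  have h2 : HasSum (fun n => ‖x n‖ ^ (2 : ℝ≥0∞).toReal) (‖x‖ ^ (2 : ℝ≥0∞).toReal) :=
    lp.hasSum_norm hp x
  have h3 : HasSum ((fun n => ‖(S x) n‖ ^ (2 : ℝ≥0∞).toReal) ∘ f)
      (‖S x‖ ^ (2 : ℝ≥0∞).toReal) := by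
    rw [hf.hasSum_iff]
    · exact h1
    · intro n hn
      simp [Sx_apply_not_range f S hS x hn, Real.zero_rpow hp.ne']
  have h4 : ((fun n => ‖(S x) n‖ ^ (2 : ℝ≥0∞).toReal) ∘ f) =
      fun k => ‖x k‖ ^ (2 : ℝ≥0∞).toReal := by
    funext k
    simp [Function.comp, Sx_apply_f f hf S hS x k]
  rw [h4] at h3
  have h5 : ‖S x‖ ^ (2 : ℝ≥0∞).toReal = ‖x‖ ^ (2 : ℝ≥0∞).toReal := h3.unique h2
  exact Real.rpow_left_injOn hp.ne' (Set.mem_setOf.2 (norm_nonneg _))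
    (Set.mem_setOf.2 (norm_nonneg _)) h5

/-- If the injection `f` has a unique fixed point `j̄` and no other periodic points,
then the point spectrum of `S_f` is exactly `{1}` and every eigenvector is a multiple
of `e j̄`. -/
theorem stmt3 (f : ℕ → ℕ) (hf : Function.Injective f)
    (jbar : ℕ) (hfix : f jbar = jbar)
    (hper : ∀ (k h : ℕ), 1 ≤ h → k ≠ jbar → f^[h] k ≠ k)
    (S : lp (fun _ : ℕ => ℂ) 2 →L[ℂ] lp (fun _ : ℕ => ℂ) 2)
    (hS : ∀ k, S (e k) = e (f k)) :
    (∀ lam : ℂ, (∃ x : lp (fun _ : ℕ => ℂ) 2, x ≠ 0 ∧ S x = lam • x) ↔ lam = 1) ∧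
    (∀ (x : lp (fun _ : ℕ => ℂ) 2) (lam : ℂ), x ≠ 0 → S x = lam • x →
      ∃ c : ℂ, x = c • e jbar) := by
  -- main analysis of an eigenvector
  have main : ∀ (x : lp (fun _ : ℕ => ℂ) 2) (lam : ℂ), x ≠ 0 → S x = lam • x →
      lam = 1 ∧ x = (x jbar) • e jbar := by
    intro x lam hx heq
    -- coordinate recursion
    have hco : ∀ k, x k = lam * x (f k) := by
      intro k
      have h1 : (S x) (f k) = x k := Sx_apply_f f hf S hS x k
      rw [heq] at h1
      rw [← h1, lp.coeFn_smul]
      simp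
    -- |lam| = 1
    have hnx : ‖x‖ ≠ 0 := fun h => hx (norm_eq_zero.mp h)
    have hlam : ‖lam‖ = 1 := by
      have h1 : ‖S x‖ = ‖x‖ := norm_Sx f hf S hS x
      rw [heq, norm_smul] at h1
      nth_rewrite 2 [← one_mul ‖x‖] at h1
      exact mul_right_cancel₀ hnx h1
    have habs : ∀ k, ‖x k‖ = ‖x (f k)‖ := by
      intro k
      rw [hco k, norm_mul, hlam, one_mul]
    have hiter : ∀ (h k : ℕ), ‖x (f^[h] k)‖ = ‖x k‖ := by
      intro h
      induction h with
      | zero => simp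
      | succ n ih =>
        intro k
        rw [Function.iterate_succ_apply, ih (f k), ← habs k]
    -- all coordinates off jbar vanish
    have hzero : ∀ k, k ≠ jbar → x k = 0 := by
      intro k hk
      by_contra hxk
      -- orbit is injective
      have horb : Function.Injective (fun h : ℕ => f^[h] k) := by
        have key : ∀ a b : ℕ, a ≤ b → f^[a] k = f^[b] k → a = b := by
          intro a b hab h
          by_contra hne
          have hba : 1 ≤ b - a := by omega
          have h2 : f^[b - a] (f^[a] k) = f^[a] k := by
            rw [← Function.iterate_add_apply, Nat.sub_add_cancel hab, ← h]
          have h3 : f^[a] k ≠ jbar := by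
            intro h4
            apply hk
            have : f^[a] k = f^[a] jbar := by rw [h4, Function.iterate_fixed hfix]
            exact hf.iterate a this
          exact hper (f^[a] k) (b - a) hba h3 h2
        intro a b h
        rcases le_total a b with hab | hab
        · exact key a b hab h
        · exact (key b a hab h.symm).symm
      -- summability contradiction
      have hsum : Summable (fun n => ‖x n‖ ^ (2 : ℝ≥0∞).toReal) :=
        (lp.memℓp x).summable (by norm_num)
      have hsum2 : Summable ((fun n => ‖x n‖ ^ (2 : ℝ≥0∞).toReal) ∘ fun h : ℕ => f^[h] k) :=
        hsum.comp_injective horb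
      have hconst : ((fun n => ‖x n‖ ^ (2 : ℝ≥0∞).toReal) ∘ fun h : ℕ => f^[h] k) =
          fun _ : ℕ => ‖x k‖ ^ (2 : ℝ≥0∞).toReal := by
        funext h
        simp [Function.comp, hiter h k]
      rw [hconst] at hsum2
      have h0 : ‖x k‖ ^ (2 : ℝ≥0∞).toReal = 0 :=
        (summable_const_iff (‖x k‖ ^ (2 : ℝ≥0∞).toReal)).mp hsum2
      have : ‖x k‖ = 0 :=
        (Real.rpow_eq_zero (norm_nonneg _) (by norm_num)).mp h0
      exact hxk (norm_eq_zero.mp this)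
    -- x = x jbar • e jbar
    have hxe : x = (x jbar) • e jbar := by
      apply lp.ext
      funext n
      rw [lp.coeFn_smul, Pi.smul_apply, smul_eq_mul]
      by_cases hn : n = jbar
      · subst hn; rw [e_apply_self, mul_one]
      · rw [hzero n hn, e_apply_ne hn, mul_zero]
    -- x jbar ≠ 0
    have hxj : x jbar ≠ 0 := by
      intro h
      apply hx
      rw [hxe, h, zero_smul]
    have hl1 : lam = 1 := by
      have := hco jbar
      rw [hfix] at this
      nth_rewrite 1 [← one_mul (x jbar)] at this
      exact (mul_right_cancel₀ hxj this.symm)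
    exact ⟨hl1, hxe⟩
  constructor
  · intro lam
    constructor
    · rintro ⟨x, hx, heq⟩
      exact (main x lam hx heq).1
    · rintro rfl
      refine ⟨e jbar, ?_, ?_⟩
      · intro h
        have : (e jbar) jbar = 0 := by rw [h]; rfl
        rw [e_apply_self] at this
        exact one_ne_zero this
      · rw [hS, hfix, one_smul]
  · intro x lam hx heq
    exact ⟨x jbar, (main x lam hx heq).2⟩
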